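/- Let S* ⊆ (0, ∞) be open and additive with infimum l > 0, and let S = [0, ∞) \ S*. Then S contains no open interval of length greater than l; that is, for any a < b with b - a > l, the interval (a, b) is not contained in S. -/
import Mathlib


theorem no_long_interval (Sstar : Set ℝ) (hsub : Sstar ⊆ Set.Ioi 0)
    (hopen : IsOpen Sstar) (hadd : ∀ a ∈ Sstar, ∀ b ∈ Sstar, a + b ∈ Sstar)
    (hl : 0 < sInf Sstar) (a b : ℝ) (hab : a < b) (hlen : sInf Sstar < b - a) :
    ¬ (Set.Ioo a b ⊆ Set.Ici (0 : ℝ) \ Sstar) := by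
  intro hsubset
  rcases lt_or_ge a 0 with ha | ha
  · -- pick a negative point of (a,b)
    set x := (a + min b 0) / 2 with hx
    have hxa : a < x := by
      have : a < min b 0 := lt_min hab ha
      simp only [hx]; linarith
    have hxb : x < b := by
      have : min b 0 ≤ b := min_le_left _ _
      simp only [hx]; linarith
    have hxneg : x < 0 := by
      have : min b 0 ≤ 0 := min_le_right _ _
      simp only [hx]; linarith
    have := (hsubset ⟨hxa, hxb⟩).1
    simp only [Set.mem_Ici] at this
    linarith
  · -- a ≥ 0
    have hne : Sstar.Nonempty := by
      by_contra h
      rw [Set.not_nonempty_iff_eq_empty] at h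
      rw [h, Real.sInf_empty] at hl
      exact lt_irrefl 0 hl
    obtain ⟨s, hs, hsba⟩ := exists_lt_of_csInf_lt hne hlen
    have hs0 : 0 < s := hsub hs
    have hmul : ∀ n : ℕ, ((n : ℝ) + 1) * s ∈ Sstar := by
      intro n
      induction n with
      | zero => simpa using hs
      | succ m ih =>
        have : ((m : ℝ) + 1) * s + s ∈ Sstar := hadd _ ih _ hs
        push_cast
        convert this using 1
        ring
    have hex : ∃ n : ℕ, a < ((n : ℝ) + 1) * s := by
      obtain ⟨n, hn⟩ := exists_nat_gt (a / s)
      refine ⟨n, ?_⟩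
      have : a / s * s < (n : ℝ) * s := by
        exact mul_lt_mul_of_pos_right hn hs0
      rw [div_mul_cancel₀ _ (ne_of_gt hs0)] at this
      nlinarith
    set n := Nat.find hex with hn
    have hna : a < ((n : ℝ) + 1) * s := Nat.find_spec hex
    have hnb : ((n : ℝ) + 1) * s < b := by
      rcases Nat.eq_zero_or_pos n with h0 | hpos
      · rw [h0]; push_cast; linarith
      · obtain ⟨m, hm⟩ := Nat.exists_eq_succ_of_ne_zero hpos.ne'
        have hmin : ¬ a < ((m : ℝ) + 1) * s := Nat.find_min hex (by omega)
        push_neg at hmin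
        have heq : ((n : ℝ) + 1) * s = ((m : ℝ) + 1) * s + s := by
          have : (n : ℝ) = (m : ℝ) + 1 := by exact_mod_cast congrArg Nat.cast hm
          rw [this]; ring
        linarith
    have := (hsubset ⟨hna, hnb⟩).2
    exact this (hmul n)
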